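/- For n ≥ 2, the number of ways to seat n man-woman couples at a circular table with 2n labeled seats so that men and women alternate and no one sits adjacent to their partner equals 2·n! · ∑_{r=0}^{n} (−1)^r · (2n/(2n−r)) · C(2n−r, r) · (n−r)!. -/

import Mathlib

/-- Two seats of the `2n`-cycle are adjacent. -/
def SeatAdj {m : ℕ} (a b : ZMod m) : Prop := a = b + 1 ∨ b = a + 1

namespace Menage

/-- number of `r`-subsets of `Ico a b` with no two consecutive elements -/
def lin (a b r : ℕ) : ℕ :=
  (((Finset.Ico a b).powersetCard r).filter (fun t => ∀ x ∈ t, x + 1 ∉ t)).card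

lemma lin_zero (a b : ℕ) : lin a b 0 = 1 := by
  rw [lin, Finset.powersetCard_zero, Finset.filter_singleton]
  simp

lemma lin_eq : ∀ k : ℕ, ∀ r a : ℕ, r ≤ k → lin a (a + k) r = Nat.choose (k - r + 1) r := by
  intro k
  induction k using Nat.strong_induction_on with
  | _ k IH =>
    intro r a hr
    rcases Nat.eq_zero_or_pos r with hr0 | hr0
    · subst hr0; simp [lin_zero]
    rcases Nat.lt_or_ge k 2 with hk2 | hk2
    · -- k = 1, r = 1
      have hk1 : k = 1 := by omega
      have hr1 : r = 1 := by omega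
      subst hk1; subst hr1
      have hico : Finset.Ico a (a + 1) = {a} := by
        ext x; simp only [Finset.mem_Ico, Finset.mem_singleton]; omega
      rw [lin, hico]
      have hps : Finset.powersetCard 1 ({a} : Finset ℕ) = {{a}} := by
        have h := Finset.powersetCard_self ({a} : Finset ℕ)
        rwa [Finset.card_singleton] at h
      rw [hps, Finset.filter_singleton, if_pos]
      · simp
      · intro x hx
        simp only [Finset.mem_singleton] at hx
        subst hx
        simp
    -- k ≥ 2, 1 ≤ r ≤ k
    rcases Nat.eq_or_lt_of_le hr with hrk | hrk
    · -- r = k : count is 0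
      subst hrk
      have h0 : lin a (a + r) r = 0 := by
        rw [lin, Finset.card_eq_zero, Finset.filter_eq_empty_iff]
        intro t ht
        rw [Finset.mem_powersetCard] at ht
        have : t = Finset.Ico a (a + r) := by
          apply Finset.eq_of_subset_of_card_le ht.1
          rw [ht.2, Nat.card_Ico]; omega
        subst this
        intro h
        have h1 : a ∈ Finset.Ico a (a + r) := by simp [Finset.mem_Ico]; omega
        have h2 : a + 1 ∈ Finset.Ico a (a + r) := by simp [Finset.mem_Ico]; omega
        exact (h a h1) h2
      rw [h0]
      have : r - r + 1 = 1 := by omega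
      rw [this]
      exact (Nat.choose_eq_zero_of_lt (by omega)).symm
    -- 1 ≤ r < k
    have key := Finset.card_filter_add_card_filter_not
      (s := ((Finset.Ico a (a+k)).powersetCard r).filter (fun t => ∀ x ∈ t, x + 1 ∉ t))
      (p := fun t => a + k - 1 ∈ t)
    have e1 : ((((Finset.Ico a (a+k)).powersetCard r).filter (fun t => ∀ x ∈ t, x + 1 ∉ t)).filter
        (fun t => ¬ a + k - 1 ∈ t)).card = lin a (a + (k-1)) r := by
      rw [lin]
      congr 1
      ext t
      simp only [Finset.mem_filter, Finset.mem_powersetCard]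
      constructor
      · rintro ⟨⟨⟨hsub, hcard⟩, hP⟩, htop⟩
        refine ⟨⟨fun x hx => ?_, hcard⟩, hP⟩
        have := hsub hx
        rw [Finset.mem_Ico] at this ⊢
        have : x ≠ a + k - 1 := fun h => htop (h ▸ hx)
        omega
      · rintro ⟨⟨hsub, hcard⟩, hP⟩
        refine ⟨⟨⟨fun x hx => ?_, hcard⟩, hP⟩, fun htop => ?_⟩
        · have := hsub hx; rw [Finset.mem_Ico] at this ⊢; omega
        · have := hsub htop; rw [Finset.mem_Ico] at this; omega
    have e2 : ((((Finset.Ico a (a+k)).powersetCard r).filter (fun t => ∀ x ∈ t, x + 1 ∉ t)).filter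
        (fun t => a + k - 1 ∈ t)).card = lin a (a + (k-2)) (r-1) := by
      rw [lin]
      refine Finset.card_bij' (fun t _ => t.erase (a + k - 1)) (fun t _ => insert (a + k - 1) t)
        ?_ ?_ ?_ ?_
      · -- maps to
        intro t ht
        simp only [Finset.mem_filter, Finset.mem_powersetCard] at ht ⊢
        obtain ⟨⟨⟨hsub, hcard⟩, hP⟩, htop⟩ := ht
        refine ⟨⟨fun x hx => ?_, ?_⟩, fun x hx hx1 => ?_⟩
        · have hxt := Finset.mem_of_mem_erase hx
          have hxne := Finset.ne_of_mem_erase hx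
          have hb := hsub hxt
          rw [Finset.mem_Ico] at hb ⊢
          have : x ≠ a + k - 2 := by
            intro h
            have : x + 1 = a + k - 1 := by omega
            exact hP x hxt (this ▸ htop)
          omega
        · rw [Finset.card_erase_of_mem htop, hcard]
        · exact hP x (Finset.mem_of_mem_erase hx) (Finset.mem_of_mem_erase hx1)
      · -- reverse maps to
        intro t ht
        simp only [Finset.mem_filter, Finset.mem_powersetCard] at ht ⊢
        obtain ⟨⟨hsub, hcard⟩, hP⟩ := ht
        have hnot : a + k - 1 ∉ t := by
          intro h; have := hsub h; rw [Finset.mem_Ico] at this; omega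
        refine ⟨⟨⟨fun x hx => ?_, ?_⟩, fun x hx hx1 => ?_⟩, Finset.mem_insert_self _ _⟩
        · rcases Finset.mem_insert.1 hx with h | h
          · rw [Finset.mem_Ico]; omega
          · have := hsub h; rw [Finset.mem_Ico] at this ⊢; omega
        · rw [Finset.card_insert_of_notMem hnot, hcard]; omega
        · rcases Finset.mem_insert.1 hx with h | h
          · -- x = top, x+1 = a+k ∉ insert
            subst h
            rcases Finset.mem_insert.1 hx1 with h1 | h1
            · omega
            · have := hsub h1; rw [Finset.mem_Ico] at this; omega
          · rcases Finset.mem_insert.1 hx1 with h1 | h1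
            · have := hsub h; rw [Finset.mem_Ico] at this; omega
            · exact hP x h h1
      · intro t ht
        simp only [Finset.mem_filter] at ht
        exact Finset.insert_erase ht.2
      · intro t ht
        simp only [Finset.mem_filter, Finset.mem_powersetCard] at ht
        apply Finset.erase_insert
        intro h; have := ht.1.1 h; rw [Finset.mem_Ico] at this; omega
      
    have IH1 := IH (k-1) (by omega) r a (by omega)
    have IH2 := IH (k-2) (by omega) (r-1) a (by omega)
    rw [e1, e2, IH1, IH2] at key
    rw [lin, ← key]
    have h1 : k - 1 - r + 1 = k - r := by omega
    have h2 : k - 2 - (r-1) + 1 = k - r := by omega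
    rw [h1, h2]
    have h3 : (k - r + 1).choose r = (k-r).choose (r-1) + (k-r).choose r := by
      have hcs := Nat.choose_succ_succ (k - r) (r - 1)
      have hr' : r - 1 + 1 = r := by omega
      simp only [Nat.succ_eq_add_one, hr'] at hcs
      omega
    omega


/-- number of `r`-subsets of `range m` with no two cyclically consecutive elements -/
def cyc (m r : ℕ) : ℕ :=
  (((Finset.range m).powersetCard r).filter (fun t => ∀ x ∈ t, (x + 1) % m ∉ t)).card

lemma cyc_eq (m r : ℕ) (hr : 1 ≤ r) (hrm : 2 * r ≤ m) (hm : 4 ≤ m) :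
    cyc m r = Nat.choose (m - r) r + Nat.choose (m - r - 1) (r - 1) := by
  have key := Finset.card_filter_add_card_filter_not
    (s := ((Finset.range m).powersetCard r).filter (fun t => ∀ x ∈ t, (x + 1) % m ∉ t))
    (p := fun t => m - 1 ∈ t)
  have e1 : ((((Finset.range m).powersetCard r).filter (fun t => ∀ x ∈ t, (x + 1) % m ∉ t)).filter
      (fun t => ¬ m - 1 ∈ t)).card = lin 0 (0 + (m - 1)) r := by
    rw [lin]
    congr 1
    ext t
    simp only [Finset.mem_filter, Finset.mem_powersetCard, Finset.mem_range, Finset.mem_Ico]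
    constructor
    · rintro ⟨⟨⟨hsub, hcard⟩, hP⟩, htop⟩
      have hb : ∀ x ∈ t, x < m - 1 := by
        intro x hx
        have := Finset.mem_range.1 (hsub hx)
        have : x ≠ m - 1 := fun h => htop (h ▸ hx)
        omega
      refine ⟨⟨fun x hx => by simp only [Finset.mem_Ico]; exact ⟨Nat.zero_le x, by have := hb x hx; omega⟩, hcard⟩,
        fun x hx hx1 => ?_⟩
      have hxlt := hb x hx
      have : (x + 1) % m = x + 1 := Nat.mod_eq_of_lt (by omega)
      exact hP x hx (by rwa [this])
    · rintro ⟨⟨hsub, hcard⟩, hP⟩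
      have hb : ∀ x ∈ t, x < m - 1 := by
        intro x hx; have := hsub hx; rw [Finset.mem_Ico] at this; omega
      refine ⟨⟨⟨fun x hx => Finset.mem_range.2 (by have := hb x hx; omega), hcard⟩,
        fun x hx => ?_⟩, fun htop => by have := hb _ htop; omega⟩
      have : (x + 1) % m = x + 1 := Nat.mod_eq_of_lt (by have := hb x hx; omega)
      rw [this]
      exact hP x hx
  have e2 : ((((Finset.range m).powersetCard r).filter (fun t => ∀ x ∈ t, (x + 1) % m ∉ t)).filter
      (fun t => m - 1 ∈ t)).card = lin 1 (1 + (m - 3)) (r - 1) := by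
    rw [lin]
    refine Finset.card_bij' (fun t _ => t.erase (m - 1)) (fun t _ => insert (m - 1) t)
      ?_ ?_ ?_ ?_
    · intro t ht
      simp only [Finset.mem_filter, Finset.mem_powersetCard] at ht ⊢
      obtain ⟨⟨⟨hsub, hcard⟩, hP⟩, htop⟩ := ht
      have h0 : (0 : ℕ) ∉ t := by
        have := hP (m - 1) htop
        have hmm : (m - 1 + 1) % m = 0 := by
          have : m - 1 + 1 = m := by omega
          rw [this, Nat.mod_self]
        rwa [hmm] at this
      refine ⟨⟨fun x hx => ?_, ?_⟩, fun x hx hx1 => ?_⟩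
      · have hxt := Finset.mem_of_mem_erase hx
        have hxne := Finset.ne_of_mem_erase hx
        have hblt := Finset.mem_range.1 (hsub hxt)
        have hxm2 : x ≠ m - 2 := by
          intro h
          have hx1m : (x + 1) % m = m - 1 := by
            have : x + 1 = m - 1 := by omega
            rw [this, Nat.mod_eq_of_lt (by omega)]
          exact hP x hxt (hx1m ▸ htop)
        have hx0 : x ≠ 0 := fun h => h0 (h ▸ hxt)
        rw [Finset.mem_Ico]
        omega
      · rw [Finset.card_erase_of_mem htop, hcard]
      · have hxt := Finset.mem_of_mem_erase hx
        have hblt := Finset.mem_range.1 (hsub hxt)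
        have hxne := Finset.ne_of_mem_erase hx
        have : (x + 1) % m = x + 1 := Nat.mod_eq_of_lt (by omega)
        exact hP x hxt (by rw [this]; exact Finset.mem_of_mem_erase hx1)
    · intro t ht
      simp only [Finset.mem_filter, Finset.mem_powersetCard] at ht ⊢
      obtain ⟨⟨hsub, hcard⟩, hP⟩ := ht
      have hb : ∀ x ∈ t, 1 ≤ x ∧ x < m - 2 := by
        intro x hx; have := hsub hx; rw [Finset.mem_Ico] at this; omega
      have hnot : m - 1 ∉ t := by intro h; have := hb _ h; omega
      refine ⟨⟨⟨fun x hx => ?_, ?_⟩, fun x hx hx1 => ?_⟩, Finset.mem_insert_self _ _⟩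
      · rcases Finset.mem_insert.1 hx with h | h
        · rw [Finset.mem_range]; omega
        · have := hb x h; rw [Finset.mem_range]; omega
      · rw [Finset.card_insert_of_notMem hnot, hcard]; omega
      · rcases Finset.mem_insert.1 hx with h | h
        · subst h
          have hmm : (m - 1 + 1) % m = 0 := by
            have : m - 1 + 1 = m := by omega
            rw [this, Nat.mod_self]
          rw [hmm] at hx1
          rcases Finset.mem_insert.1 hx1 with h1 | h1
          · omega
          · have := hb _ h1; omega
        · have hbx := hb x h
          have : (x + 1) % m = x + 1 := Nat.mod_eq_of_lt (by omega)
          rw [this] at hx1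
          rcases Finset.mem_insert.1 hx1 with h1 | h1
          · omega
          · exact hP x h h1
    · intro t ht
      simp only [Finset.mem_filter] at ht
      exact Finset.insert_erase ht.2
    · intro t ht
      simp only [Finset.mem_filter, Finset.mem_powersetCard] at ht
      apply Finset.erase_insert
      intro h; have := ht.1.1 h; rw [Finset.mem_Ico] at this; omega
  rw [e1, e2, lin_eq (m-1) r 0 (by omega), lin_eq (m-3) (r-1) 1 (by omega)] at key
  have h1 : m - 1 - r + 1 = m - r := by omega
  have h2 : m - 3 - (r - 1) + 1 = m - r - 1 := by omega
  rw [h1, h2] at key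
  rw [cyc, ← key]
  omega


def csucc {n : ℕ} (x : ZMod n × Bool) : ZMod n × Bool :=
  if x.2 then (x.1 + 1, false) else (x.1, true)

def idx {n : ℕ} (x : ZMod n × Bool) : ℕ := 2 * x.1.val + x.2.toNat

def gdx (n : ℕ) (k : ℕ) : ZMod n × Bool := (((k / 2 : ℕ) : ZMod n), decide (k % 2 = 1))

lemma btoNat_le_one (b : Bool) : b.toNat ≤ 1 := by cases b <;> simp

section Idx

variable {n : ℕ} [NeZero n]

lemma idx_lt (x : ZMod n × Bool) : idx x < 2 * n := by
  have h1 := ZMod.val_lt x.1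
  have h2 : x.2.toNat ≤ 1 := btoNat_le_one x.2
  rw [idx]; omega

lemma idx_inj : Function.Injective (idx (n := n)) := by
  rintro ⟨j, b⟩ ⟨j', b'⟩ h
  rw [idx, idx] at h
  simp only at h
  have hb : b.toNat ≤ 1 := btoNat_le_one b
  have hb' : b'.toNat ≤ 1 := btoNat_le_one b'
  have h1 : j.val = j'.val := by omega
  have h2 : b.toNat = b'.toNat := by omega
  have hj : j = j' := ZMod.val_injective n h1
  have hbb : b = b' := by
    cases b <;> cases b' <;> simp_all
  rw [hj, hbb]

lemma gdx_idx (x : ZMod n × Bool) : gdx n (idx x) = x := by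
  obtain ⟨j, b⟩ := x
  rw [idx, gdx]
  simp only
  have ht : b.toNat ≤ 1 := btoNat_le_one b
  have h1 : (2 * j.val + b.toNat) / 2 = j.val := by omega
  have h2 : (2 * j.val + b.toNat) % 2 = b.toNat := by omega
  rw [h1, h2]
  rw [ZMod.natCast_rightInverse j]
  cases b <;> simp

omit [NeZero n] in
lemma idx_gdx {k : ℕ} (hk : k < 2 * n) : idx (gdx n k) = k := by
  rw [idx, gdx]
  simp only
  have h1 : ((k / 2 : ℕ) : ZMod n).val = k / 2 := ZMod.val_natCast_of_lt (by omega)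
  rw [h1]
  rcases Nat.mod_two_eq_zero_or_one k with h | h <;> simp [h] <;> omega

lemma idx_csucc (hn : 2 ≤ n) (x : ZMod n × Bool) :
    idx (csucc x) = (idx x + 1) % (2 * n) := by
  haveI : Fact (1 < n) := ⟨by omega⟩
  obtain ⟨j, b⟩ := x
  have hjv := ZMod.val_lt j
  cases b
  · rw [csucc]
    simp only [if_neg Bool.false_ne_true]
    rw [idx, idx]
    simp only [Bool.toNat_false, Bool.toNat_true]
    rw [Nat.mod_eq_of_lt (by omega)]
  · rw [csucc]
    simp only [if_pos trivial]
    rw [idx, idx]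
    simp only [Bool.toNat_false, Bool.toNat_true]
    have hadd : (j + 1).val = (j.val + 1) % n := by
      rw [ZMod.val_add, ZMod.val_one]
    rw [hadd]
    rcases Nat.lt_or_ge (j.val + 1) n with h | h
    · rw [Nat.mod_eq_of_lt h, Nat.mod_eq_of_lt (by omega)]
      omega
    · have hjn : j.val + 1 = n := by omega
      rw [hjn, Nat.mod_self]
      have : 2 * j.val + 1 + 1 = 2 * n := by omega
      rw [this, Nat.mod_self]

variable (n) in
def K (r : ℕ) : ℕ :=
  (((Finset.univ : Finset (ZMod n × Bool)).powersetCard r).filter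
    (fun T => ∀ x ∈ T, csucc x ∉ T)).card

lemma K_eq_cyc (hn : 2 ≤ n) (r : ℕ) : K (n := n) r = cyc (2 * n) r := by
  rw [K, cyc]
  refine Finset.card_bij' (fun T _ => T.image idx) (fun t _ => t.image (gdx n)) ?_ ?_ ?_ ?_
  · intro T hT
    simp only [Finset.mem_filter, Finset.mem_powersetCard] at hT ⊢
    obtain ⟨⟨-, hcard⟩, hind⟩ := hT
    refine ⟨⟨fun a ha => ?_, ?_⟩, fun a ha ha1 => ?_⟩
    · obtain ⟨x, hx, rfl⟩ := Finset.mem_image.1 ha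
      exact Finset.mem_range.2 (idx_lt x)
    · rw [Finset.card_image_of_injective _ idx_inj, hcard]
    · obtain ⟨x, hx, rfl⟩ := Finset.mem_image.1 ha
      obtain ⟨y, hy, hyx⟩ := Finset.mem_image.1 ha1
      have : idx y = idx (csucc x) := by rw [hyx, idx_csucc hn]
      have := idx_inj this
      subst this
      exact hind x hx hy
  · intro t ht
    simp only [Finset.mem_filter, Finset.mem_powersetCard] at ht ⊢
    obtain ⟨⟨hsub, hcard⟩, hQ⟩ := ht
    have hlt : ∀ a ∈ t, a < 2 * n := fun a ha => Finset.mem_range.1 (hsub ha)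
    refine ⟨⟨Finset.subset_univ _, ?_⟩, fun x hx hx1 => ?_⟩
    · rw [Finset.card_image_of_injOn, hcard]
      intro a ha b hb hab
      have : idx (gdx n a) = idx (gdx n b) := by rw [hab]
      rwa [idx_gdx (hlt a ha), idx_gdx (hlt b hb)] at this
    · obtain ⟨a, ha, rfl⟩ := Finset.mem_image.1 hx
      obtain ⟨c, hc, hcx⟩ := Finset.mem_image.1 hx1
      have h1 : idx (csucc (gdx n a)) = (a + 1) % (2 * n) := by
        rw [idx_csucc hn, idx_gdx (hlt a ha)]
      have h2 : idx (gdx n c) = c := idx_gdx (hlt c hc)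
      have : c = (a + 1) % (2 * n) := by rw [← h2, hcx, h1]
      exact hQ a ha (this ▸ hc)
  · intro T hT
    rw [Finset.image_image]
    rw [show ((gdx n) ∘ idx) = id from funext gdx_idx]
    exact Finset.image_id
  · intro t ht
    simp only [Finset.mem_filter, Finset.mem_powersetCard] at ht
    have hlt : ∀ a ∈ t, a < 2 * n := fun a ha => Finset.mem_range.1 (ht.1.1 ha)
    rw [Finset.image_image]
    have : ∀ a ∈ t, (idx ∘ gdx n) a = id a := fun a ha => idx_gdx (hlt a ha)
    rw [Finset.image_congr this, Finset.image_id]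

lemma csucc_inj : Function.Injective (csucc (n := n)) := by
  rintro ⟨j, b⟩ ⟨j', b'⟩ h
  cases b <;> cases b' <;> rw [csucc, csucc] at h <;> simp_all

lemma K_zero : K n 0 = 1 := by
  rw [K, Finset.powersetCard_zero, Finset.filter_singleton, if_pos (by simp)]
  simp

lemma card_gamma : Fintype.card (ZMod n × Bool) = 2 * n := by
  rw [Fintype.card_prod, ZMod.card, Fintype.card_bool]; ring

lemma K_eq_zero {r : ℕ} (hr : n < r) : K n r = 0 := by
  rw [K, Finset.card_eq_zero, Finset.filter_eq_empty_iff]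
  intro T hT hind
  rw [Finset.mem_powersetCard] at hT
  have hdisj : Disjoint T (T.image csucc) := by
    rw [Finset.disjoint_right]
    intro y hy hyT
    obtain ⟨x, hx, rfl⟩ := Finset.mem_image.1 hy
    exact hind x hx hyT
  have hcard : (T ∪ T.image csucc).card = 2 * r := by
    rw [Finset.card_union_of_disjoint hdisj, Finset.card_image_of_injective _ csucc_inj, hT.2]
    ring
  have := Finset.card_le_univ (T ∪ T.image csucc)
  rw [hcard, card_gamma] at this
  omega

lemma K_formula (hn : 2 ≤ n) {r : ℕ} (hr1 : 1 ≤ r) (hrn : r ≤ n) :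
    K n r = Nat.choose (2 * n - r) r + Nat.choose (2 * n - r - 1) (r - 1) := by
  rw [K_eq_cyc hn, cyc_eq (2 * n) r hr1 (by omega) (by omega)]

end Idx

/-- Counting permutations extending a partial bijection. -/
lemma card_perm_extend {α : Type*} [Fintype α] [DecidableEq α] {ι : Type*} [Fintype ι]
    (u v : ι → α) (hu : Function.Injective u) (hv : Function.Injective v) :
    Nat.card {σ : Equiv.Perm α // ∀ i, σ (u i) = v i} =
      Nat.factorial (Fintype.card α - Fintype.card ι) := by
  classical
  set s : Set α := Set.range u with hs
  set t : Set α := Set.range v with ht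
  set e0 : s ≃ t := (Equiv.ofInjective u hu).symm.trans (Equiv.ofInjective v hv) with he0
  have hkey : ∀ (i : ι) (hmem : u i ∈ s), (e0 ⟨u i, hmem⟩ : α) = v i := by
    intro i hmem
    have h1 : (Equiv.ofInjective u hu).symm ⟨u i, hmem⟩ = i := by
      apply hu
      exact Equiv.apply_ofInjective_symm hu ⟨u i, hmem⟩
    rw [he0]
    simp only [Equiv.trans_apply, h1]
    rfl
  have hprop : ∀ σ : Equiv.Perm α, (∀ i, σ (u i) = v i) ↔ (∀ x : s, σ x = e0 x) := by
    intro σ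
    constructor
    · rintro h ⟨-, i, rfl⟩
      exact (h i).trans (hkey i _).symm
    · intro h i
      have := h ⟨u i, ⟨i, rfl⟩⟩
      exact this.trans (hkey i _)
  have e1 : {σ : Equiv.Perm α // ∀ i, σ (u i) = v i} ≃
      {e : α ≃ α // ∀ x : s, e x = e0 x} :=
    Equiv.subtypeEquiv (Equiv.refl _) (fun σ => by simpa using hprop σ)
  have e2 := Equiv.Set.compl e0
  rw [Nat.card_congr (e1.trans e2)]
  have hcs : Fintype.card s = Fintype.card ι := Set.card_range_of_injective hu
  have hct : Fintype.card t = Fintype.card ι := Set.card_range_of_injective hv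
  have hcsc : Fintype.card (↥sᶜ) = Fintype.card α - Fintype.card ι := by
    rw [Fintype.card_compl_set, hcs]
  have hctc : Fintype.card (↥tᶜ) = Fintype.card α - Fintype.card ι := by
    rw [Fintype.card_compl_set, hct]
  have eee : (↥sᶜ) ≃ (↥tᶜ) := Fintype.equivOfCardEq (by rw [hcsc, hctc])
  rw [Nat.card_eq_fintype_card, Fintype.card_equiv eee, hcsc]


def cell {n : ℕ} : ZMod n × Bool → ZMod n × ZMod n
  | (j, false) => (j, j)
  | (j, true) => (j + 1, j)

@[simp] lemma cell_false {n : ℕ} (j : ZMod n) : cell (j, false) = (j, j) := rfl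
@[simp] lemma cell_true {n : ℕ} (j : ZMod n) : cell (j, true) = (j + 1, j) := rfl
@[simp] lemma csucc_false {n : ℕ} (j : ZMod n) : csucc (j, false) = (j, true) := rfl
@[simp] lemma csucc_true {n : ℕ} (j : ZMod n) : csucc (j, true) = (j + 1, false) := rfl

section IE

variable {n : ℕ} [NeZero n]

lemma one_ne_zero' (hn : 2 ≤ n) : (1 : ZMod n) ≠ 0 := by
  haveI : Fact (1 < n) := ⟨by omega⟩
  exact one_ne_zero

/-- the number of permutations hitting all cells of `T` -/
noncomputable def NT (n : ℕ) [NeZero n] (T : Finset (ZMod n × Bool)) : ℕ :=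
  Nat.card {σ : Equiv.Perm (ZMod n) // ∀ x ∈ T, σ (cell x).1 = (cell x).2}

lemma NT_indep (hn : 2 ≤ n) (T : Finset (ZMod n × Bool))
    (hind : ∀ x ∈ T, csucc x ∉ T) : NT n T = Nat.factorial (n - T.card) := by
  classical
  have e : {σ : Equiv.Perm (ZMod n) // ∀ x ∈ T, σ (cell x).1 = (cell x).2} ≃
      {σ : Equiv.Perm (ZMod n) // ∀ i : {x // x ∈ T}, σ (cell i.1).1 = (cell i.1).2} :=
    Equiv.subtypeEquivRight (fun σ => ⟨fun h i => h i.1 i.2, fun h x hx => h ⟨x, hx⟩⟩)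
  rw [NT, Nat.card_congr e]
  have hu : Function.Injective (fun i : {x // x ∈ T} => (cell i.1).1) := by
    rintro ⟨⟨j, b⟩, hx⟩ ⟨⟨j', b'⟩, hy⟩ h
    cases b <;> cases b' <;> simp only [cell_false, cell_true] at h
    · exact Subtype.ext (congrArg (fun z => (z, false)) h)
    · exfalso
      apply hind (j', true) hy
      rw [csucc_true, ← h]
      exact hx
    · exfalso
      apply hind (j, true) hx
      rw [csucc_true, h]
      exact hy
    · exact Subtype.ext (congrArg (fun z => (z, true)) (add_right_cancel h))
  have hv : Function.Injective (fun i : {x // x ∈ T} => (cell i.1).2) := by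
    rintro ⟨⟨j, b⟩, hx⟩ ⟨⟨j', b'⟩, hy⟩ h
    cases b <;> cases b' <;> simp only [cell_false, cell_true] at h
    · exact Subtype.ext (congrArg (fun z => (z, false)) h)
    · exfalso
      apply hind (j, false) hx
      rw [csucc_false, h]
      exact hy
    · exfalso
      apply hind (j', false) hy
      rw [csucc_false, ← h]
      exact hx
    · exact Subtype.ext (congrArg (fun z => (z, true)) h)
  have := card_perm_extend (fun i : {x // x ∈ T} => (cell i.1).1)
    (fun i => (cell i.1).2) hu hv
  rw [this, Fintype.card_coe, ZMod.card]

lemma NT_dep (hn : 2 ≤ n) (T : Finset (ZMod n × Bool))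
    (h : ¬ ∀ x ∈ T, csucc x ∉ T) : NT n T = 0 := by
  push_neg at h
  obtain ⟨x, hx, hsx⟩ := h
  haveI : IsEmpty {σ : Equiv.Perm (ZMod n) // ∀ x ∈ T, σ (cell x).1 = (cell x).2} := by
    constructor
    rintro ⟨σ, hσ⟩
    have h1 := hσ x hx
    have h2 := hσ (csucc x) hsx
    obtain ⟨j, b⟩ := x
    cases b
    · simp only [csucc_false, cell_false, cell_true] at h1 h2
      have hje : j = j + 1 := σ.injective (by rw [h1, h2])
      exact one_ne_zero' hn (left_eq_add.mp hje)
    · simp only [csucc_true, cell_false, cell_true] at h1 h2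
      exact one_ne_zero' hn (left_eq_add.mp (h1.symm.trans h2))
  rw [NT, Nat.card_of_isEmpty]

lemma card_S (hn : 2 ≤ n) :
    (Nat.card {σ : Equiv.Perm (ZMod n) // ∀ x : ZMod n × Bool, σ (cell x).1 ≠ (cell x).2} : ℤ)
      = ∑ r ∈ Finset.range (2 * n + 1),
          (-1 : ℤ) ^ r * K n r * Nat.factorial (n - r) := by
  classical
  rw [Nat.card_eq_fintype_card, Fintype.card_subtype]
  have step2 : (((Finset.univ.filter
      (fun σ : Equiv.Perm (ZMod n) => ∀ x : ZMod n × Bool, σ (cell x).1 ≠ (cell x).2)).card : ℤ))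
      = ∑ σ : Equiv.Perm (ZMod n),
          if (∀ x : ZMod n × Bool, σ (cell x).1 ≠ (cell x).2) then (1 : ℤ) else 0 := by
    rw [Finset.sum_boole]
  rw [step2]
  have step3 : ∀ σ : Equiv.Perm (ZMod n),
      (if (∀ x : ZMod n × Bool, σ (cell x).1 ≠ (cell x).2) then (1 : ℤ) else 0)
      = ∏ x : ZMod n × Bool,
          ((fun x => -(if σ (cell x).1 = (cell x).2 then (1 : ℤ) else 0)) x + 1) := by
    intro σ
    have : ∀ x : ZMod n × Bool,
        ((fun x => -(if σ (cell x).1 = (cell x).2 then (1 : ℤ) else 0)) x + 1)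
        = if σ (cell x).1 ≠ (cell x).2 then (1 : ℤ) else 0 := by
      intro x
      by_cases h : σ (cell x).1 = (cell x).2 <;> simp [h]
    rw [Finset.prod_congr rfl (fun x _ => this x), Fintype.prod_boole]
  rw [Finset.sum_congr rfl (fun σ _ => step3 σ)]
  have step4 : ∀ σ : Equiv.Perm (ZMod n),
      (∏ x : ZMod n × Bool,
        ((fun x => -(if σ (cell x).1 = (cell x).2 then (1 : ℤ) else 0)) x + 1))
      = ∑ T ∈ (Finset.univ : Finset (ZMod n × Bool)).powerset,
          (-1 : ℤ) ^ T.card * ∏ x ∈ T, (if σ (cell x).1 = (cell x).2 then (1 : ℤ) else 0) := by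
    intro σ
    rw [Finset.prod_add]
    apply Finset.sum_congr rfl
    intro T hT
    rw [Finset.prod_const_one, mul_one]
    rw [show (∏ x ∈ T, -(if σ (cell x).1 = (cell x).2 then (1 : ℤ) else 0))
      = ∏ x ∈ T, ((-1 : ℤ) * (if σ (cell x).1 = (cell x).2 then (1 : ℤ) else 0)) from
      Finset.prod_congr rfl (fun x _ => by ring)]
    rw [Finset.prod_mul_distrib, Finset.prod_const]
  rw [Finset.sum_congr rfl (fun σ _ => step4 σ), Finset.sum_comm]
  have step5 : ∀ T ∈ (Finset.univ : Finset (ZMod n × Bool)).powerset,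
      (∑ σ : Equiv.Perm (ZMod n), (-1 : ℤ) ^ T.card *
        ∏ x ∈ T, (if σ (cell x).1 = (cell x).2 then (1 : ℤ) else 0))
      = (-1 : ℤ) ^ T.card * NT n T := by
    intro T hT
    rw [← Finset.mul_sum]
    congr 1
    have : ∀ σ : Equiv.Perm (ZMod n),
        (∏ x ∈ T, (if σ (cell x).1 = (cell x).2 then (1 : ℤ) else 0))
        = if (∀ x ∈ T, σ (cell x).1 = (cell x).2) then (1 : ℤ) else 0 := by
      intro σ
      by_cases hc : ∀ x ∈ T, σ (cell x).1 = (cell x).2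
      · rw [if_pos hc]
        exact Finset.prod_eq_one (fun x hx => by rw [if_pos (hc x hx)])
      · rw [if_neg hc]
        push_neg at hc
        obtain ⟨x, hx, hne⟩ := hc
        exact Finset.prod_eq_zero hx (by rw [if_neg hne])
    rw [Finset.sum_congr rfl (fun σ _ => this σ), Finset.sum_boole, NT,
      Nat.card_eq_fintype_card, Fintype.card_subtype]
  rw [Finset.sum_congr rfl step5]
  have step6 : ∀ T ∈ (Finset.univ : Finset (ZMod n × Bool)).powerset,
      (-1 : ℤ) ^ T.card * NT n T
      = (-1 : ℤ) ^ T.card *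
          (if (∀ x ∈ T, csucc x ∉ T) then (Nat.factorial (n - T.card) : ℤ) else 0) := by
    intro T hT
    by_cases h : ∀ x ∈ T, csucc x ∉ T
    · rw [if_pos h, NT_indep hn T h]
    · rw [if_neg h, NT_dep hn T h]
      simp
  rw [Finset.sum_congr rfl step6]
  rw [Finset.sum_powerset]
  rw [Finset.card_univ, card_gamma]
  apply Finset.sum_congr rfl
  intro r hr
  have inner : ∀ T ∈ Finset.powersetCard r (Finset.univ : Finset (ZMod n × Bool)),
      (-1 : ℤ) ^ T.card *
          (if (∀ x ∈ T, csucc x ∉ T) then (Nat.factorial (n - T.card) : ℤ) else 0)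
      = if (∀ x ∈ T, csucc x ∉ T) then ((-1 : ℤ) ^ r * Nat.factorial (n - r)) else 0 := by
    intro T hT
    have hc : T.card = r := (Finset.mem_powersetCard.1 hT).2
    rw [hc, mul_ite, mul_zero]
  rw [Finset.sum_congr rfl inner, ← Finset.sum_filter, Finset.sum_const]
  rw [show (Finset.filter (fun T => ∀ x ∈ T, csucc x ∉ T)
      (Finset.powersetCard r (Finset.univ : Finset (ZMod n × Bool)))).card = K n r from rfl]
  rw [nsmul_eq_mul]
  push_cast
  ring

end IE


section Seating

variable {n : ℕ} [NeZero n]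

lemma csucc_snd (x : ZMod n × Bool) : (csucc x).2 = !x.2 := by
  obtain ⟨j, b⟩ := x; cases b <;> rfl

variable (n) in
def φmap (x : ZMod n × Bool) : ZMod (2 * n) := ((idx x : ℕ) : ZMod (2 * n))

lemma two_n_ne : NeZero (2 * n) := ⟨by have := NeZero.pos n; omega⟩

lemma φmap_inj : Function.Injective (φmap n) := by
  haveI := two_n_ne (n := n)
  intro x y h
  apply idx_inj
  have hx := idx_lt x
  have hy := idx_lt y
  have hv : ((idx x : ℕ) : ZMod (2 * n)).val = ((idx y : ℕ) : ZMod (2 * n)).val := by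
    rw [show ((idx x : ℕ) : ZMod (2 * n)) = ((idx y : ℕ) : ZMod (2 * n)) from h]
  rwa [ZMod.val_natCast_of_lt hx, ZMod.val_natCast_of_lt hy] at hv

lemma φmap_bij : Function.Bijective (φmap n) := by
  haveI := two_n_ne (n := n)
  rw [Fintype.bijective_iff_injective_and_card]
  exact ⟨φmap_inj, by rw [card_gamma, ZMod.card]⟩

noncomputable def Φ : (ZMod n × Bool) ≃ ZMod (2 * n) := Equiv.ofBijective _ φmap_bij

lemma Φ_apply (x : ZMod n × Bool) : Φ x = ((idx x : ℕ) : ZMod (2 * n)) := rfl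

lemma Φ_csucc (hn : 2 ≤ n) (x : ZMod n × Bool) : Φ (csucc x) = Φ x + 1 := by
  haveI := two_n_ne (n := n)
  rw [Φ_apply, Φ_apply, idx_csucc hn, ZMod.natCast_mod]
  push_cast
  ring

lemma SeatAdj_Φ (hn : 2 ≤ n) (x y : ZMod n × Bool) :
    SeatAdj (Φ x) (Φ y) ↔ (y = csucc x ∨ x = csucc y) := by
  rw [SeatAdj, ← Φ_csucc hn, ← Φ_csucc hn, Equiv.apply_eq_iff_eq, Equiv.apply_eq_iff_eq]
  tauto

def xorE (b : Bool) : Bool ≃ Bool where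
  toFun g := xor g b
  invFun g := xor g b
  left_inv g := by cases g <;> cases b <;> rfl
  right_inv g := by cases g <;> cases b <;> rfl

def shear (σ : Equiv.Perm (ZMod n)) : (ZMod n × Bool) ≃ (ZMod n × Bool) where
  toFun x := match x with
    | (j, false) => (j, false)
    | (j, true) => (σ j, true)
  invFun x := match x with
    | (j, false) => (j, false)
    | (j, true) => (σ.symm j, true)
  left_inv x := by obtain ⟨j, b⟩ := x; cases b <;> simp
  right_inv x := by obtain ⟨j, b⟩ := x; cases b <;> simp

lemma shear_apply (σ : Equiv.Perm (ZMod n)) (j : ZMod n) (h : Bool) :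
    shear σ (j, h) = (if h then σ j else j, h) := by cases h <;> rfl

variable (n) in
noncomputable def ΨF
    (a : Bool × (Fin n ≃ ZMod n) ×
      {σ : Equiv.Perm (ZMod n) // ∀ x : ZMod n × Bool, σ (cell x).1 ≠ (cell x).2}) :
    (Fin n × Bool) ≃ ZMod (2 * n) :=
  ((a.2.1.prodCongr (xorE a.1)).trans (shear a.2.2.1)).trans Φ

lemma ΨF_apply (a) (i : Fin n) (g : Bool) :
    ΨF n a ((i, g) : Fin n × Bool)
      = Φ ((if xor g a.1 then a.2.2.1 (a.2.1 i) else a.2.1 i), xor g a.1) := by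
  rw [ΨF]
  simp only [Equiv.trans_apply, Equiv.prodCongr_apply, Prod.map_apply]
  rw [show (xorE a.1) g = xor g a.1 from rfl, shear_apply]

lemma hσ_facts (σ : Equiv.Perm (ZMod n))
    (hσ : ∀ x : ZMod n × Bool, σ (cell x).1 ≠ (cell x).2) :
    (∀ j, σ j ≠ j) ∧ (∀ j, σ j + 1 ≠ j) := by
  constructor
  · intro j
    have := hσ (j, false)
    simpa using this
  · intro j h
    have h2 := hσ (j - 1, true)
    rw [cell_true] at h2
    simp only [sub_add_cancel] at h2
    exact h2 (eq_sub_of_add_eq h)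

lemma exists_b (hn : 2 ≤ n) (f : (Fin n × Bool) ≃ ZMod (2 * n))
    (h1 : ∀ p q, SeatAdj (f p) (f q) → p.2 ≠ q.2) :
    ∃ b : Bool, ∀ p : Fin n × Bool, (Φ.symm (f p)).2 = xor p.2 b := by
  haveI := two_n_ne (n := n)
  set g : ZMod (2 * n) → Bool := fun s => xor (f.symm s).2 (Φ.symm s).2 with hg
  have hstep : ∀ s, g (s + 1) = g s := by
    intro s
    have hΦs : (Φ.symm (s + 1) : ZMod n × Bool).2 = !(Φ.symm s : ZMod n × Bool).2 := by
      have hc : (Φ.symm (s + 1) : ZMod n × Bool) = csucc (Φ.symm s) := by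
        rw [Equiv.symm_apply_eq, Φ_csucc hn, Equiv.apply_symm_apply]
      rw [hc, csucc_snd]
    have hf : (f.symm (s + 1)).2 ≠ (f.symm s).2 := by
      apply h1
      rw [f.apply_symm_apply, f.apply_symm_apply]
      left
      rfl
    have hf' : (f.symm (s + 1)).2 = !(f.symm s).2 := by
      cases h : (f.symm s).2 <;> cases h' : (f.symm (s+1)).2 <;> simp_all
    rw [hg]
    simp only
    rw [hΦs, hf']
    cases (f.symm s).2 <;> cases (Φ.symm s : ZMod n × Bool).2 <;> rfl
  have hnat : ∀ k : ℕ, g ((k : ℕ) : ZMod (2 * n)) = g 0 := by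
    intro k
    induction k with
    | zero => norm_num
    | succ m ih => rw [Nat.cast_add, Nat.cast_one, hstep]; exact ih
  have hall : ∀ s, g s = g 0 := by
    intro s
    have := hnat s.val
    rwa [ZMod.natCast_rightInverse s] at this
  refine ⟨g 0, fun p => ?_⟩
  have hp := hall (f p)
  rw [hg] at hp
  simp only at hp
  rw [f.symm_apply_apply] at hp
  show (Φ.symm (f p)).2 = xor p.2 (xor (f.symm 0).2 (Φ.symm 0).2)
  rw [← hp]
  cases p.2 <;> cases (Φ.symm (f p) : ZMod n × Bool).2 <;> rfl

lemma ΨF_apply_same (b : Bool) (w : Fin n ≃ ZMod n)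
    (σ : {σ : Equiv.Perm (ZMod n) // ∀ x : ZMod n × Bool, σ (cell x).1 ≠ (cell x).2})
    (i : Fin n) : ΨF n (b, w, σ) (i, b) = Φ (w i, false) := by
  rw [ΨF_apply, Bool.xor_self]
  simp

lemma ΨF_apply_diff (b : Bool) (w : Fin n ≃ ZMod n)
    (σ : {σ : Equiv.Perm (ZMod n) // ∀ x : ZMod n × Bool, σ (cell x).1 ≠ (cell x).2})
    (i : Fin n) : ΨF n (b, w, σ) (i, !b) = Φ (σ.1 (w i), true) := by
  rw [ΨF_apply, show xor (!b) b = true from by cases b <;> rfl]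
  simp

lemma card_M (hn : 2 ≤ n) :
    Nat.card {f : (Fin n × Bool) ≃ ZMod (2 * n) //
        (∀ p q, SeatAdj (f p) (f q) → p.2 ≠ q.2) ∧
        (∀ i : Fin n, ¬ SeatAdj (f (i, true)) (f (i, false)))}
      = 2 * Nat.factorial n *
        Nat.card {σ : Equiv.Perm (ZMod n) //
          ∀ x : ZMod n × Bool, σ (cell x).1 ≠ (cell x).2} := by
  haveI := two_n_ne (n := n)
  have hmem : ∀ a : Bool × (Fin n ≃ ZMod n) ×
      {σ : Equiv.Perm (ZMod n) // ∀ x : ZMod n × Bool, σ (cell x).1 ≠ (cell x).2},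
      (∀ p q, SeatAdj (ΨF n a p) (ΨF n a q) → p.2 ≠ q.2) ∧
      (∀ i : Fin n, ¬ SeatAdj (ΨF n a (i, true)) (ΨF n a (i, false))) := by
    rintro ⟨b, w, σ, hσ⟩
    obtain ⟨hσ1, hσ3⟩ := hσ_facts σ hσ
    constructor
    · rintro ⟨i, gi⟩ ⟨i', gi'⟩ hadj
      rw [ΨF_apply, ΨF_apply, SeatAdj_Φ hn] at hadj
      intro hgg
      simp only at hgg
      subst hgg
      rcases hadj with h | h <;>
      · have hsnd := congrArg Prod.snd h
        rw [csucc_snd] at hsnd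
        simp only at hsnd
        simp at hsnd
    · intro i hadj
      have e1 : ((i, true) : Fin n × Bool) = (i, !(!true)) := rfl
      cases b
      · rw [show ((i, true) : Fin n × Bool) = (i, !false) from rfl] at hadj
        rw [ΨF_apply_diff, ΨF_apply_same, SeatAdj_Φ hn] at hadj
        rcases hadj with h | h
        · rw [csucc_true] at h
          have h' := congrArg Prod.fst h
          dsimp only at h'
          exact hσ3 (w i) h'.symm
        · rw [csucc_false] at h
          have h' := congrArg Prod.fst h
          dsimp only at h'
          exact hσ1 (w i) h'
      · rw [show ((i, false) : Fin n × Bool) = (i, !true) from rfl] at hadj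
        rw [ΨF_apply_diff, ΨF_apply_same, SeatAdj_Φ hn] at hadj
        rcases hadj with h | h
        · rw [csucc_false] at h
          have h' := congrArg Prod.fst h
          dsimp only at h'
          exact hσ1 (w i) h'
        · rw [csucc_true] at h
          have h' := congrArg Prod.fst h
          dsimp only at h'
          exact hσ3 (w i) h'.symm
  set F : (Bool × (Fin n ≃ ZMod n) ×
      {σ : Equiv.Perm (ZMod n) // ∀ x : ZMod n × Bool, σ (cell x).1 ≠ (cell x).2}) →
      {f : (Fin n × Bool) ≃ ZMod (2 * n) //
        (∀ p q, SeatAdj (f p) (f q) → p.2 ≠ q.2) ∧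
        (∀ i : Fin n, ¬ SeatAdj (f (i, true)) (f (i, false)))} :=
    fun a => ⟨ΨF n a, hmem a⟩ with hFdef
  have hinj : Function.Injective F := by
    rintro ⟨b, w, σ⟩ ⟨b', w', σ'⟩ h
    have hfe : ΨF n (b, w, σ) = ΨF n (b', w', σ') := Subtype.ext_iff.1 h
    have hfun : ∀ p, ΨF n (b, w, σ) p = ΨF n (b', w', σ') p := fun p => by rw [hfe]
    have i0 : Fin n := ⟨0, by omega⟩
    have hb : b = b' := by
      by_contra hbb
      have hb'' : b = !b' := by
        cases b <;> cases b' <;> first | rfl | exact absurd rfl hbb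
      have h0 := hfun (i0, b)
      rw [ΨF_apply_same] at h0
      rw [show ((i0, b) : Fin n × Bool) = (i0, !b') from by rw [hb'']] at h0
      rw [ΨF_apply_diff] at h0
      have := Φ.injective h0
      exact Bool.false_ne_true (congrArg Prod.snd this)
    subst hb
    have hw : w = w' := by
      apply Equiv.ext
      intro i
      have h0 := hfun (i, b)
      rw [ΨF_apply_same, ΨF_apply_same] at h0
      exact congrArg Prod.fst (Φ.injective h0)
    subst hw
    have hσ : σ = σ' := by
      apply Subtype.ext
      apply Equiv.ext
      intro j
      have h0 := hfun (w.symm j, !b)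
      rw [ΨF_apply_diff, ΨF_apply_diff] at h0
      have h1 := congrArg Prod.fst (Φ.injective h0)
      simp only at h1
      rwa [Equiv.apply_symm_apply w j] at h1
    rw [hσ]
  have hsurj : Function.Surjective F := by
    rintro ⟨f, h1, h2⟩
    obtain ⟨b, hb⟩ := exists_b hn f h1
    have hne : ∀ i, ¬ SeatAdj (f (i, !b)) (f (i, b)) := by
      intro i
      cases b
      · exact h2 i
      · exact fun hc => h2 i (Or.symm hc)
    have hΦf : ∀ i g, f (i, g) = Φ ((Φ.symm (f (i, g))).1, xor g b) := by
      intro i g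
      conv_lhs => rw [← Φ.apply_symm_apply (f (i, g))]
      congr 1
      exact Prod.ext rfl (hb (i, g))
    set w0 : Fin n → ZMod n := fun i => (Φ.symm (f (i, b))).1 with hw0def
    set m0 : Fin n → ZMod n := fun i => (Φ.symm (f (i, !b))).1 with hm0def
    have hA : ∀ i, f (i, b) = Φ (w0 i, false) := by
      intro i
      rw [hΦf i b, Bool.xor_self]
    have hB : ∀ i, f (i, !b) = Φ (m0 i, true) := by
      intro i
      rw [hΦf i (!b), show xor (!b) b = true from by cases b <;> rfl]
    have hF1F2 : ∀ i, m0 i ≠ w0 i ∧ w0 i ≠ m0 i + 1 := by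
      intro i
      have hna := hne i
      rw [hA, hB, SeatAdj_Φ hn] at hna
      obtain ⟨hc1, hc2⟩ := not_or.1 hna
      constructor
      · intro h
        exact hc2 (by rw [csucc_false, h])
      · intro h
        exact hc1 (by rw [csucc_true, h])
    have hw0i : Function.Injective w0 := by
      intro i i' hii
      have hfe : f (i, b) = f (i', b) := by rw [hA, hA, hii]
      have h3 := f.injective hfe
      rw [Prod.mk.injEq] at h3
      exact h3.1
    have hm0i : Function.Injective m0 := by
      intro i i' hii
      have hfe : f (i, !b) = f (i', !b) := by rw [hB, hB, hii]
      have h3 := f.injective hfe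
      rw [Prod.mk.injEq] at h3
      exact h3.1
    have hw0b : Function.Bijective w0 :=
      (Fintype.bijective_iff_injective_and_card w0).2 ⟨hw0i, by simp [ZMod.card]⟩
    have hm0b : Function.Bijective m0 :=
      (Fintype.bijective_iff_injective_and_card m0).2 ⟨hm0i, by simp [ZMod.card]⟩
    have hσ0p : ∀ x : ZMod n × Bool,
        ((Equiv.ofBijective w0 hw0b).symm.trans (Equiv.ofBijective m0 hm0b)) (cell x).1
          ≠ (cell x).2 := by
      rintro ⟨j, bx⟩
      cases bx
      · rw [cell_false]
        simp only
        intro hcon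
        set i := (Equiv.ofBijective w0 hw0b).symm j with hi
        have hji : w0 i = j := Equiv.apply_symm_apply (Equiv.ofBijective w0 hw0b) j
        have : m0 i = j := hcon
        exact (hF1F2 i).1 (by rw [this, hji])
      · rw [cell_true]
        simp only
        intro hcon
        set i := (Equiv.ofBijective w0 hw0b).symm (j + 1) with hi
        have hji : w0 i = j + 1 := Equiv.apply_symm_apply (Equiv.ofBijective w0 hw0b) (j + 1)
        have hmi : m0 i = j := hcon
        exact (hF1F2 i).2 (by rw [hmi, hji])
    refine ⟨(b, Equiv.ofBijective w0 hw0b,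
      ⟨(Equiv.ofBijective w0 hw0b).symm.trans (Equiv.ofBijective m0 hm0b), hσ0p⟩), ?_⟩
    apply Subtype.ext
    apply Equiv.ext
    rintro ⟨i, g⟩
    show ΨF n _ (i, g) = f (i, g)
    rw [ΨF_apply]
    simp only
    rw [hΦf i g]
    congr 1
    refine Prod.ext ?_ rfl
    simp only
    by_cases hgb : g = b
    · subst hgb
      rw [Bool.xor_self]
      simp only [Bool.false_eq_true, if_false]
      rfl
    · have hgb' : g = !b := by
        cases g <;> cases b <;> first | rfl | exact absurd rfl hgb
      subst hgb'
      rw [show xor (!b) b = true from by cases b <;> rfl]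
      simp only [if_true]
      show (Equiv.ofBijective m0 hm0b) ((Equiv.ofBijective w0 hw0b).symm (w0 i)) = m0 i
      rw [show w0 i = (Equiv.ofBijective w0 hw0b) i from rfl, Equiv.symm_apply_apply]
      rfl
  rw [← Nat.card_eq_of_bijective F ⟨hinj, hsurj⟩, Nat.card_prod, Nat.card_prod]
  have c1 : Nat.card Bool = 2 := by simp [Nat.card_eq_fintype_card]
  have c2 : Nat.card (Fin n ≃ ZMod n) = Nat.factorial n := by
    rw [Nat.card_eq_fintype_card,
      Fintype.card_equiv (Fintype.equivOfCardEq (by simp [ZMod.card])), Fintype.card_fin]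
  rw [c1, c2, mul_assoc]

end Seating

end Menage


/-- For `n ≥ 2`, the number of ways to seat `n` man-woman couples (person `(i, g)` is the
member of gender `g` of couple `i`) at a circular table with `2n` labeled seats so that
genders alternate and no one sits adjacent to their partner equals
`2·n! · ∑_{r=0}^{n} (−1)^r · (2n/(2n−r)) · C(2n−r, r) · (n−r)!`. -/
theorem menage_seatings (n : ℕ) (hn : 2 ≤ n) :
    (Nat.card {f : (Fin n × Bool) ≃ ZMod (2 * n) //
        (∀ p q, SeatAdj (f p) (f q) → p.2 ≠ q.2) ∧
        (∀ i : Fin n, ¬ SeatAdj (f (i, true)) (f (i, false)))} : ℚ) =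
      2 * Nat.factorial n *
        ∑ r ∈ Finset.range (n + 1),
          (-1 : ℚ) ^ r * (2 * n / ((2 * n : ℚ) - r)) * Nat.choose (2 * n - r) r *
            Nat.factorial (n - r) := by
  haveI : NeZero n := ⟨by omega⟩
  rw [Menage.card_M hn]
  have hZ := Menage.card_S (n := n) hn
  have hdrop : ∑ r ∈ Finset.range (2 * n + 1),
        (-1 : ℤ) ^ r * Menage.K n r * Nat.factorial (n - r)
      = ∑ r ∈ Finset.range (n + 1),
        (-1 : ℤ) ^ r * Menage.K n r * Nat.factorial (n - r) := by
    symm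
    apply Finset.sum_subset (Finset.range_subset_range.2 (by omega))
    intro r hr hnr
    rw [Finset.mem_range] at hr hnr
    rw [Menage.K_eq_zero (by omega)]
    simp
  have h1 : (Nat.card {σ : Equiv.Perm (ZMod n) //
      ∀ x : ZMod n × Bool, σ (Menage.cell x).1 ≠ (Menage.cell x).2} : ℤ)
      = ∑ r ∈ Finset.range (n + 1),
          (-1 : ℤ) ^ r * Menage.K n r * Nat.factorial (n - r) := hZ.trans hdrop
  have h2 : ((Nat.card {σ : Equiv.Perm (ZMod n) //
      ∀ x : ZMod n × Bool, σ (Menage.cell x).1 ≠ (Menage.cell x).2} : ℕ) : ℚ)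
      = ∑ r ∈ Finset.range (n + 1),
          (-1 : ℚ) ^ r * Menage.K n r * Nat.factorial (n - r) := by
    have h3 := congrArg (fun z : ℤ => (z : ℚ)) h1
    push_cast at h3
    exact h3
  push_cast
  rw [h2, Finset.mul_sum, Finset.mul_sum]
  apply Finset.sum_congr rfl
  intro r hr
  rw [Finset.mem_range] at hr
  rcases Nat.eq_zero_or_pos r with rfl | hrpos
  · rw [Menage.K_zero]
    have h2n : ((2 : ℚ) * n) ≠ 0 := by
      have : (0 : ℚ) < n := by exact_mod_cast Nat.lt_of_lt_of_le (by omega : 0 < 2) hn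
      positivity
    simp [div_self h2n]
  · have hK := Menage.K_formula (n := n) hn hrpos (by omega)
    rw [hK]
    have hcast : ((2 : ℚ) * n - r) = ((2 * n - r : ℕ) : ℚ) := by
      rw [Nat.cast_sub (by omega)]
      push_cast
      ring
    have hne : ((2 * n - r : ℕ) : ℚ) ≠ 0 := Nat.cast_ne_zero.2 (by omega)
    have hnat : (Nat.choose (2 * n - r) r + Nat.choose (2 * n - r - 1) (r - 1)) * (2 * n - r)
        = 2 * n * Nat.choose (2 * n - r) r := by
      have hid := Nat.add_one_mul_choose_eq (2 * n - r - 1) (r - 1)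
      rw [show 2 * n - r - 1 + 1 = 2 * n - r from by omega,
        show r - 1 + 1 = r from by omega] at hid
      calc (Nat.choose (2 * n - r) r + Nat.choose (2 * n - r - 1) (r - 1)) * (2 * n - r)
          = Nat.choose (2 * n - r) r * (2 * n - r)
            + (2 * n - r) * Nat.choose (2 * n - r - 1) (r - 1) := by ring
        _ = Nat.choose (2 * n - r) r * (2 * n - r) + Nat.choose (2 * n - r) r * r := by
            rw [hid]
        _ = ((2 * n - r) + r) * Nat.choose (2 * n - r) r := by ring
        _ = 2 * n * Nat.choose (2 * n - r) r := by rw [show (2 * n - r) + r = 2 * n from by omega]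
    have hQ : ((Nat.choose (2 * n - r) r : ℚ) + (Nat.choose (2 * n - r - 1) (r - 1) : ℚ))
        = 2 * n / ((2 : ℚ) * n - r) * (Nat.choose (2 * n - r) r : ℚ) := by
      rw [hcast, div_mul_eq_mul_div, eq_div_iff hne]
      have h4 := congrArg (Nat.cast : ℕ → ℚ) hnat
      push_cast at h4
      push_cast
      linarith [h4]
    push_cast
    rw [hQ]
    ring
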